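/- In the allegory A_P of an elementary existential doctrine P, composition satisfies the modular law: for θ ∈ P(A×B), ζ ∈ P(B×C), ξ ∈ P(A×C), one has (ζ∘θ) ∧ ξ ≤ ζ∘(θ ∧ (ζ°∘ξ)). -/

import Mathlib

open CategoryTheory CategoryTheory.Limits

universe u v w

/-- Layer 0: an indexed family of inf-semilattices over a category. -/
structure DocL0 (C : Type u) [Category.{v} C] where
  obj : C → Type w
  semi : ∀ A : C, SemilatticeInf (obj A)

attribute [instance] DocL0.semi

/-- Layer 1: fibrewise top elements. -/
structure DocL1 (C : Type u) [Category.{v} C] extends DocL0.{u, v, w} C where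
  otop : ∀ A : C, OrderTop (obj A)

attribute [instance] DocL1.otop

/-- A doctrine: an indexed inf-semilattice `P : Cᵒᵖ → InfSL`. -/
structure Doctrine (C : Type u) [Category.{v} C] extends DocL1.{u, v, w} C where
  map : ∀ {A B : C}, (A ⟶ B) → obj B → obj A
  map_id : ∀ (A : C) (x : obj A), map (𝟙 A) x = x
  map_comp : ∀ {A B D : C} (f : A ⟶ B) (g : B ⟶ D) (x : obj D),
    map (f ≫ g) x = map f (map g x)
  map_mono : ∀ {A B : C} (f : A ⟶ B), Monotone (map f)
  map_inf : ∀ {A B : C} (f : A ⟶ B) (x y : obj B),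
    map f (x ⊓ y) = map f x ⊓ map f y
  map_top : ∀ {A B : C} (f : A ⟶ B), map f (⊤ : obj B) = (⊤ : obj A)

/-- An elementary existential doctrine. -/
structure EED (C : Type u) [Category.{v} C] [HasBinaryProducts C] extends
    Doctrine.{u, v, w} C where
  delta : ∀ A : C, obj (A ⨯ A)
  elem_i : ∀ {A : C} (α : obj A) (β : obj (A ⨯ A)),
    map prod.fst α ⊓ delta A ≤ β ↔ α ≤ map (diag A) β
  elem_ii : ∀ {X A : C} (α : obj (X ⨯ A)) (β : obj ((X ⨯ A) ⨯ A)),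
    map prod.fst α ⊓ map (prod.lift (prod.fst ≫ prod.snd) prod.snd) (delta A) ≤ β ↔
      α ≤ map (prod.lift (𝟙 (X ⨯ A)) prod.snd) β
  ex : ∀ {A B : C}, (A ⟶ B) → obj A → obj B
  ex_adj : ∀ {A B : C} (f : A ⟶ B) (α : obj A) (β : obj B),
    ex f α ≤ β ↔ α ≤ map f β
  frobenius : ∀ {A B : C} (f : A ⟶ B) (α : obj B) (β : obj A),
    ex f (map f α ⊓ β) = α ⊓ ex f β
  beck_chevalley : ∀ {A A' B : C} (f : A' ⟶ A) (β : obj (A ⨯ B)),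
    ex prod.fst (map (prod.map f (𝟙 B)) β) = map f (ex prod.fst β)

namespace EED

variable {C : Type u} [Category.{v} C] [HasBinaryProducts C] (P : EED.{u, v, w} C)

/-- Relational composition `∃_{p₂}(P_{⟨p₁,p₂⟩}(θ) ∧ P_{⟨p₂,p₃⟩}(ζ))`. -/
noncomputable def comp {A B D : C} (θ : P.obj (A ⨯ B)) (ζ : P.obj (B ⨯ D)) : P.obj (A ⨯ D) :=
  P.ex (prod.lift (prod.fst ≫ prod.fst) prod.snd)
    (P.map prod.fst θ ⊓ P.map (prod.lift (prod.fst ≫ prod.snd) prod.snd) ζ)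

/-- Opposite relation `P_{⟨p₂,p₁⟩}(θ)`. -/
noncomputable def op {A B : C} (θ : P.obj (A ⨯ B)) : P.obj (B ⨯ A) :=
  P.map (prod.lift prod.snd prod.fst) θ

/-- `ρ ≤ P_{⟨p₂,p₁⟩}(ρ)`. -/
def SymmRel {A : C} (ρ : P.obj (A ⨯ A)) : Prop :=
  ρ ≤ P.map (prod.lift prod.snd prod.fst) ρ

/-- `P_{⟨p₁,p₂⟩}(ρ) ∧ P_{⟨p₂,p₃⟩}(ρ) ≤ P_{⟨p₁,p₃⟩}(ρ)` in `P((A×A)×A)`. -/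
def TransRel {A : C} (ρ : P.obj (A ⨯ A)) : Prop :=
  P.map prod.fst ρ ⊓ P.map (prod.lift (prod.fst ≫ prod.snd) prod.snd) ρ ≤
    P.map (prod.lift (prod.fst ≫ prod.fst) prod.snd) ρ

/-- `δ_A ≤ ρ`. -/
def ReflRel {A : C} (ρ : P.obj (A ⨯ A)) : Prop := P.delta A ≤ ρ

/-- A `P`-equivalence relation. -/
def EqRel {A : C} (ρ : P.obj (A ⨯ A)) : Prop :=
  P.ReflRel ρ ∧ P.SymmRel ρ ∧ P.TransRel ρ

/-- Conditions (i)–(v) for an arrow `φ : ⟨A,ρ⟩ → ⟨B,σ⟩` of the exact completion `T_P`. -/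
def IsArrow {A B : C} (ρ : P.obj (A ⨯ A)) (σ : P.obj (B ⨯ B)) (φ : P.obj (A ⨯ B)) : Prop :=
  (φ ≤ P.map (prod.lift prod.fst prod.fst) ρ ⊓ P.map (prod.lift prod.snd prod.snd) σ) ∧
  (P.map prod.fst ρ ⊓ P.map (prod.lift (prod.fst ≫ prod.snd) prod.snd) φ ≤
      P.map (prod.lift (prod.fst ≫ prod.fst) prod.snd) φ) ∧
  (P.map prod.fst φ ⊓ P.map (prod.lift (prod.fst ≫ prod.snd) prod.snd) σ ≤
      P.map (prod.lift (prod.fst ≫ prod.fst) prod.snd) φ) ∧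
  (P.map prod.fst φ ⊓ P.map (prod.lift (prod.fst ≫ prod.fst) prod.snd) φ ≤
      P.map (prod.lift (prod.fst ≫ prod.snd) prod.snd) σ) ∧
  (P.map (diag A) ρ ≤ P.ex prod.fst φ)

/-- The graph relation `L[f] = ∃_{p₂}(P_{⟨p₁,p₂⟩}(ρ) ∧ P_{⟨f∘p₂,p₃⟩}(σ))` in `P(A×B)`. -/
noncomputable def Lrel {A B : C} (f : A ⟶ B) (ρ : P.obj (A ⨯ A)) (σ : P.obj (B ⨯ B)) : P.obj (A ⨯ B) :=
  P.ex (prod.lift (prod.fst ≫ prod.fst) prod.snd)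
    (P.map prod.fst ρ ⊓ P.map (prod.lift (prod.fst ≫ prod.snd ≫ f) prod.snd) σ)

end EED

/-- the modular law in the allegory `A_P`:
`(ζ∘θ) ∧ ξ ≤ ζ∘(θ ∧ (ζ°∘ξ))`. -/
theorem allegory_modular_law
    {C : Type u} [Category.{v} C] [HasBinaryProducts C] (P : EED.{u, v, w} C)
    {A B D : C} (θ : P.obj (A ⨯ B)) (ζ : P.obj (B ⨯ D)) (ξ : P.obj (A ⨯ D)) :
    P.comp θ ζ ⊓ ξ ≤ P.comp (θ ⊓ P.comp ξ (P.op ζ)) ζ := by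
  have exmono : ∀ {X Y : C} (f : X ⟶ Y) (α β : P.obj X), α ≤ β → P.ex f α ≤ P.ex f β := by
    intro X Y f α β hle
    exact (P.ex_adj f α _).mpr (le_trans hle ((P.ex_adj f β _).mp le_rfl))
  have unit : ∀ {X Y : C} (f : X ⟶ Y) (α : P.obj X), α ≤ P.map f (P.ex f α) :=
    fun f α => (P.ex_adj f α _).mp le_rfl
  set e : (A ⨯ B) ⨯ D ⟶ A ⨯ D := prod.lift (prod.fst ≫ prod.fst) prod.snd with he
  set q : (A ⨯ B) ⨯ D ⟶ B ⨯ D := prod.lift (prod.fst ≫ prod.snd) prod.snd with hq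
  set e' : (A ⨯ D) ⨯ B ⟶ A ⨯ B := prod.lift (prod.fst ≫ prod.fst) prod.snd with he'
  set q' : (A ⨯ D) ⨯ B ⟶ D ⨯ B := prod.lift (prod.fst ≫ prod.snd) prod.snd with hq'
  set h : (A ⨯ B) ⨯ D ⟶ (A ⨯ D) ⨯ B := prod.lift e (prod.fst ≫ prod.snd) with hh
  have he1 : h ≫ e' = (prod.fst : (A ⨯ B) ⨯ D ⟶ A ⨯ B) := by
    apply Limits.prod.hom_ext
    · rw [Category.assoc]
      exact ((congrArg (h ≫ ·) (prod.lift_fst _ _)).trans ((Category.assoc _ _ _).symm.trans ((congrArg (· ≫ prod.fst) (prod.lift_fst _ _)).trans (prod.lift_fst _ _))))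
    · rw [Category.assoc]
      exact ((congrArg (h ≫ ·) (prod.lift_snd _ _)).trans (prod.lift_snd _ _))
  have he2 : h ≫ prod.fst = e := prod.lift_fst _ _
  have he3 : h ≫ (q' ≫ prod.lift prod.snd prod.fst) = q := by
    apply Limits.prod.hom_ext
    · rw [Category.assoc, Category.assoc]
      exact ((congrArg (h ≫ q' ≫ ·) (prod.lift_fst _ _)).trans ((congrArg (h ≫ ·) (prod.lift_snd _ _)).trans ((prod.lift_snd _ _).trans (prod.lift_fst _ _).symm)))
    · rw [Category.assoc, Category.assoc]
      exact ((congrArg (h ≫ q' ≫ ·) (prod.lift_snd _ _)).trans ((congrArg (h ≫ ·) (prod.lift_fst _ _)).trans ((Category.assoc _ _ _).symm.trans ((congrArg (· ≫ prod.snd) he2).trans ((congrArg (· ≫ prod.snd) he).trans ((prod.lift_snd _ _).trans (prod.lift_snd _ _).symm))))))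
  set γ : P.obj ((A ⨯ D) ⨯ B) := P.map prod.fst ξ ⊓ P.map q' (P.op ζ) with hγ
  have hcompx : P.comp ξ (P.op ζ) = P.ex e' γ := rfl
  have key : P.map e ξ ⊓ P.map q ζ ≤ P.map prod.fst (P.comp ξ (P.op ζ)) := by
    have step : P.map e ξ ⊓ P.map q ζ = P.map h γ := by
      rw [hγ, P.map_inf]
      unfold EED.op
      rw [← P.map_comp, he2, ← P.map_comp, ← P.map_comp, Category.assoc, he3]
    calc P.map e ξ ⊓ P.map q ζ = P.map h γ := step
      _ ≤ P.map h (P.map e' (P.ex e' γ)) := P.map_mono h (unit e' γ)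
      _ = P.map (h ≫ e') (P.ex e' γ) := (P.map_comp _ _ _).symm
      _ = P.map prod.fst (P.comp ξ (P.op ζ)) := by rw [he1, hcompx]
  have lhs : P.comp θ ζ ⊓ ξ =
      P.ex e (P.map e ξ ⊓ (P.map prod.fst θ ⊓ P.map q ζ)) := by
    rw [inf_comm]
    exact (P.frobenius e ξ _).symm
  rw [lhs]
  apply exmono
  show P.map e ξ ⊓ (P.map prod.fst θ ⊓ P.map q ζ) ≤
    P.map prod.fst (θ ⊓ P.comp ξ (P.op ζ)) ⊓ P.map q ζ
  rw [P.map_inf]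
  refine le_inf (le_inf ?_ ?_) ?_
  · exact le_trans inf_le_right inf_le_left
  · exact le_trans (inf_le_inf_left _ inf_le_right) key
  · exact le_trans inf_le_right inf_le_right
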